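/- Let X : ℝ² → ℝ² be a continuously differentiable vector field with compact support whose divergence vanishes at every point, and let φ : ℝ × ℝ² → ℝ² be a flow of X, i.e. φ(0,q) = q for all q ∈ ℝ², and for all (t,q) the map t ↦ φ(t,q) is differentiable with derivative X(φ(t,q)). Then for every t ∈ ℝ, the time-t map q ↦ φ(t,q) preserves two-dimensional Lebesgue measure. -/

import Mathlib

open MeasureTheory Set Function Real Metric


lemma partial1 {X : ℝ × ℝ → ℝ × ℝ} {q : ℝ × ℝ} (h : DifferentiableAt ℝ X q) :
    deriv (fun y : ℝ => (X (y, q.2)).1) q.1 = (fderiv ℝ X q (1, 0)).1 := by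
  have h1 : HasDerivAt (fun y : ℝ => (y, q.2)) ((1 : ℝ), (0 : ℝ)) q.1 :=
    (hasDerivAt_id q.1).prodMk (hasDerivAt_const q.1 q.2)
  have h2 : HasDerivAt (fun y : ℝ => X (y, q.2)) (fderiv ℝ X q (1, 0)) q.1 := by
    simpa [Function.comp_def] using (h.hasFDerivAt.comp_hasDerivAt q.1 h1)
  have h3 : HasDerivAt (fun y : ℝ => (X (y, q.2)).1) (fderiv ℝ X q (1, 0)).1 q.1 := by
    simpa [Function.comp_def] using ((ContinuousLinearMap.fst ℝ ℝ ℝ).hasFDerivAt.comp_hasDerivAt q.1 h2)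
  exact h3.deriv

lemma partial2 {X : ℝ × ℝ → ℝ × ℝ} {q : ℝ × ℝ} (h : DifferentiableAt ℝ X q) :
    deriv (fun z : ℝ => (X (q.1, z)).2) q.2 = (fderiv ℝ X q (0, 1)).2 := by
  have h1 : HasDerivAt (fun z : ℝ => (q.1, z)) ((0 : ℝ), (1 : ℝ)) q.2 :=
    (hasDerivAt_const q.2 q.1).prodMk (hasDerivAt_id q.2)
  have h2 : HasDerivAt (fun z : ℝ => X (q.1, z)) (fderiv ℝ X q (0, 1)) q.2 := by
    simpa [Function.comp_def] using (h.hasFDerivAt.comp_hasDerivAt q.2 h1)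
  have h3 : HasDerivAt (fun z : ℝ => (X (q.1, z)).2) (fderiv ℝ X q (0, 1)).2 q.2 := by
    simpa [Function.comp_def] using ((ContinuousLinearMap.snd ℝ ℝ ℝ).hasFDerivAt.comp_hasDerivAt q.2 h2)
  exact h3.deriv

lemma det_two (L : (ℝ×ℝ) →ₗ[ℝ] (ℝ×ℝ)) :
    LinearMap.det L = (L (1,0)).1 * (L (0,1)).2 - (L (0,1)).1 * (L (1,0)).2 := by
  rw [← LinearMap.det_toMatrix (Module.Basis.finTwoProd ℝ) L, Matrix.det_fin_two]
  simp [LinearMap.toMatrix_apply, Module.Basis.finTwoProd_zero, Module.Basis.finTwoProd_one,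
    Module.Basis.coe_finTwoProd_repr]

lemma det_perturb (u : ℝ) (A : (ℝ×ℝ) →L[ℝ] (ℝ×ℝ)) (htr : (A (1,0)).1 + (A (0,1)).2 = 0) :
    (ContinuousLinearMap.id ℝ (ℝ×ℝ) + u • A).det
      = 1 + u^2 * ((A (1,0)).1 * (A (0,1)).2 - (A (0,1)).1 * (A (1,0)).2) := by
  have := det_two (ContinuousLinearMap.id ℝ (ℝ×ℝ) + u • A : (ℝ×ℝ) →L[ℝ] (ℝ×ℝ)).toLinearMap
  rw [ContinuousLinearMap.det, this]
  simp only [ContinuousLinearMap.coe_coe, ContinuousLinearMap.add_apply,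
    ContinuousLinearMap.id_apply, ContinuousLinearMap.smul_apply, Prod.fst_add, Prod.snd_add,
    Prod.smul_fst, Prod.smul_snd, smul_eq_mul]
  linear_combination u * htr

lemma comp_bound (A : (ℝ×ℝ) →L[ℝ] (ℝ×ℝ)) (i : ℝ×ℝ) (hi : ‖i‖ ≤ 1) (C : ℝ) (hC : ‖A‖ ≤ C) :
    |(A i).1| ≤ C ∧ |(A i).2| ≤ C := by
  have h : ‖A i‖ ≤ C := le_trans (A.le_opNorm i) (by nlinarith [norm_nonneg A, (norm_nonneg i)])
  exact ⟨le_trans (Real.norm_eq_abs _ ▸ norm_fst_le (A i)) h,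
    le_trans (Real.norm_eq_abs _ ▸ norm_snd_le (A i)) h⟩

lemma psi_lintegral {X : ℝ×ℝ → ℝ×ℝ} {K : NNReal} (hX : ContDiff ℝ 1 X) (hK : LipschitzWith K X)
    (htr : ∀ q, (fderiv ℝ X q (1,0)).1 + (fderiv ℝ X q (0,1)).2 = 0)
    {u : ℝ} (hu : 0 ≤ u) (huK : u * K ≤ 1/2) (hu2 : 2 * K^2 * u^2 ≤ 1/2)
    (g : ℝ×ℝ → ENNReal) :
    ∫⁻ q, g (q + u • X q) ≤ ENNReal.ofReal (1 + 4*K^2*u^2) * ∫⁻ q, g q := by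
  set c : ℝ := 2 * K^2 * u^2 with hc
  have hc0 : 0 ≤ c := by positivity
  set ψ : ℝ×ℝ → ℝ×ℝ := fun q => q + u • X q with hψ
  have hdiff := hX.differentiable one_ne_zero
  set L : ℝ×ℝ → (ℝ×ℝ) →L[ℝ] (ℝ×ℝ) :=
    fun q => ContinuousLinearMap.id ℝ (ℝ×ℝ) + u • fderiv ℝ X q with hL
  have hder : ∀ q, HasFDerivAt ψ (L q) q := fun q =>
    (hasFDerivAt_id q).add ((hdiff q).hasFDerivAt.const_smul u)
  -- injectivity
  have hinj : InjOn ψ univ := by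
    intro q _ q' _ h
    have h1 : q - q' = u • (X q' - X q) := by
      have h2 : q + u • X q = q' + u • X q' := h
      rw [smul_sub]
      abel_nf
      linear_combination (norm := abel_nf) h2
    have h3 : ‖q - q'‖ ≤ (1/2) * ‖q - q'‖ := by
      calc ‖q - q'‖ = ‖u • (X q' - X q)‖ := by rw [h1]
        _ = u * ‖X q' - X q‖ := by rw [norm_smul, Real.norm_eq_abs, abs_of_nonneg hu]
        _ ≤ u * (K * ‖q' - q‖) := by
            refine mul_le_mul_of_nonneg_left ?_ hu
            simpa [dist_eq_norm] using hK.dist_le_mul q' q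
        _ = u * K * ‖q - q'‖ := by rw [norm_sub_rev, mul_assoc]
        _ ≤ (1/2) * ‖q - q'‖ := mul_le_mul_of_nonneg_right huK (norm_nonneg _)
    have : ‖q - q'‖ ≤ 0 := by linarith
    have := le_antisymm this (norm_nonneg _)
    rwa [norm_eq_zero, sub_eq_zero] at this
  -- determinant bounds
  have hdetlb : ∀ q, ENNReal.ofReal (1 - c) ≤ ENNReal.ofReal |(L q).det| := by
    intro q
    apply ENNReal.ofReal_le_ofReal
    have hA : ‖fderiv ℝ X q‖ ≤ (K : ℝ) := norm_fderiv_le_of_lipschitz ℝ hK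
    have hb1 := comp_bound (fderiv ℝ X q) (1,0) (by simp [Prod.norm_def]) K hA
    have hb2 := comp_bound (fderiv ℝ X q) (0,1) (by simp [Prod.norm_def]) K hA
    have hdet := det_perturb u (fderiv ℝ X q) (htr q)
    rw [hL] at *
    set a := (fderiv ℝ X q (1,0)).1; set b' := (fderiv ℝ X q (0,1)).1
    set cc := (fderiv ℝ X q (1,0)).2; set d := (fderiv ℝ X q (0,1)).2
    have habs : |a * d - b' * cc| ≤ 2 * K^2 := by
      have := abs_sub_abs_le_abs_sub (a*d) (b'*cc)
      have h1 : |a*d| ≤ K^2 := by rw [abs_mul]; nlinarith [hb1.1, hb2.2, abs_nonneg a, abs_nonneg d]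
      have h2 : |b'*cc| ≤ K^2 := by rw [abs_mul]; nlinarith [hb2.1, hb1.2, abs_nonneg b', abs_nonneg cc]
      calc |a*d - b'*cc| ≤ |a*d| + |b'*cc| := abs_sub _ _
        _ ≤ 2 * K^2 := by linarith
    rw [hdet]
    have h4 : |u^2 * (a*d - b'*cc)| ≤ c := by
      rw [abs_mul, abs_of_nonneg (sq_nonneg u), hc]
      nlinarith [sq_nonneg u]
    rw [le_abs]
    left
    have := abs_le.1 h4
    linarith [this.1]
  -- change of variables
  have hcov := lintegral_image_eq_lintegral_abs_det_fderiv_mul (volume : Measure (ℝ×ℝ))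
    MeasurableSet.univ (fun q _ => (hder q).hasFDerivWithinAt) hinj g
  rw [Measure.restrict_univ] at hcov
  have hle1 : ∫⁻ x in ψ '' univ, g x ≤ ∫⁻ q, g q :=
    setLIntegral_le_lintegral _ _
  have hle2 : ENNReal.ofReal (1 - c) * ∫⁻ q, g (ψ q) ≤ ∫⁻ q, ENNReal.ofReal |(L q).det| * g (ψ q) := by
    rw [← lintegral_const_mul' _ _ ENNReal.ofReal_ne_top]
    exact lintegral_mono fun q => mul_le_mul_left (hdetlb q) _
  have key : ENNReal.ofReal (1 - c) * ∫⁻ q, g (ψ q) ≤ ∫⁻ q, g q := by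
    calc ENNReal.ofReal (1 - c) * ∫⁻ q, g (ψ q) ≤ ∫⁻ q, ENNReal.ofReal |(L q).det| * g (ψ q) := hle2
      _ = ∫⁻ x in ψ '' univ, g x := hcov.symm
      _ ≤ ∫⁻ q, g q := hle1
  -- conclude
  have hcpos : (0:ℝ) < 1 - c := by linarith
  have hne : ENNReal.ofReal (1 - c) ≠ 0 := by
    simp only [ne_eq, ENNReal.ofReal_eq_zero, not_le]; linarith
  have key' : (∫⁻ q, g (ψ q)) * ENNReal.ofReal (1 - c) ≤ ∫⁻ q, g q := by
    rwa [mul_comm] at key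
  have := (ENNReal.le_div_iff_mul_le (Or.inl hne) (Or.inl ENNReal.ofReal_ne_top)).2 key'
  calc ∫⁻ q, g (ψ q) ≤ (∫⁻ q, g q) / ENNReal.ofReal (1 - c) := this
    _ ≤ ENNReal.ofReal (1 + 2*c) * ∫⁻ q, g q := by
        rw [ENNReal.div_le_iff_le_mul (Or.inl hne) (Or.inl ENNReal.ofReal_ne_top), mul_assoc,
          mul_comm (∫⁻ q, g q), ← mul_assoc, ← ENNReal.ofReal_mul (by linarith)]
        exact le_mul_of_one_le_left' (by
          rw [← ENNReal.ofReal_one]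
          exact ENNReal.ofReal_le_ofReal (by nlinarith))
    _ = ENNReal.ofReal (1 + 4*K^2*u^2) * ∫⁻ q, g q := by rw [hc]; ring_nf

section Flow
variable {X : ℝ × ℝ → ℝ × ℝ} {K : NNReal} {M : ℝ} {φ : ℝ → ℝ × ℝ → ℝ × ℝ}

lemma flow_group (hK : LipschitzWith K X) (hφ0 : ∀ q, φ 0 q = q)
    (hφ : ∀ t q, HasDerivAt (fun s => φ s q) (X (φ t q)) t)
    (s t : ℝ) (q : ℝ × ℝ) : φ (s + t) q = φ s (φ t q) := by
  have hc : ∀ q, Continuous fun s => φ s q := fun q =>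
    continuous_iff_continuousAt.2 fun x => (hφ x q).continuousAt
  have key : EqOn (fun u => φ (u + t) q) (fun u => φ u (φ t q)) (Icc (-(|s| + 1)) (|s| + 1)) := by
    apply ODE_solution_unique_of_mem_Icc (v := fun _ x => X x) (s := fun _ => univ)
      (fun _ _ => hK.lipschitzOnWith) (t₀ := 0)
    · constructor <;> [linarith [abs_nonneg s]; linarith [abs_nonneg s]]
    · exact ((hc q).comp (continuous_id.add continuous_const)).continuousOn
    · intro u _
      exact (hφ (u + t) q).comp_add_const u t
    · intro u _; trivial
    · exact (hc (φ t q)).continuousOn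
    · intro u _
      exact hφ u (φ t q)
    · intro u _; trivial
    · simp [hφ0]
  have hs : s ∈ Icc (-(|s| + 1)) (|s| + 1) := by
    constructor <;> [linarith [neg_abs_le s]; linarith [le_abs_self s]]
  exact key hs

lemma flow_dist (hM : ∀ p, ‖X p‖ ≤ M)
    (hφ0 : ∀ q, φ 0 q = q)
    (hφ : ∀ t q, HasDerivAt (fun s => φ s q) (X (φ t q)) t)
    (s : ℝ) (q : ℝ × ℝ) : ‖φ s q - q‖ ≤ M * |s| := by
  have := Convex.norm_image_sub_le_of_norm_hasDerivWithin_le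
    (f := fun s => φ s q) (f' := fun s => X (φ s q)) (s := univ) (C := M)
    (fun x _ => (hφ x q).hasDerivWithinAt) (fun x _ => hM _) convex_univ (mem_univ 0) (mem_univ s)
  simpa [hφ0, Real.norm_eq_abs] using this

lemma flow_lip (hK : LipschitzWith K X)
    (hφ : ∀ t q, HasDerivAt (fun s => φ s q) (X (φ t q)) t)
    {b t : ℝ} (ht : t ∈ Icc 0 b) (q q' : ℝ × ℝ) :
    dist (φ t q) (φ t q') ≤ dist (φ 0 q) (φ 0 q') * exp (K * t) := by
  have hc : ∀ q, Continuous fun s => φ s q := fun q =>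
    continuous_iff_continuousAt.2 fun x => (hφ x q).continuousAt
  have := dist_le_of_trajectories_ODE (v := fun _ x => X x) (fun _ => hK)
    (hc q).continuousOn (fun u _ => (hφ u q).hasDerivWithinAt)
    (hc q').continuousOn (fun u _ => (hφ u q').hasDerivWithinAt)
    le_rfl t ht
  simpa using this

lemma flow_approx (hK : LipschitzWith K X) (hM : ∀ p, ‖X p‖ ≤ M)
    (hφ0 : ∀ q, φ 0 q = q)
    (hφ : ∀ t q, HasDerivAt (fun s => φ s q) (X (φ t q)) t)
    {u : ℝ} (hu : 0 ≤ u) (q : ℝ × ℝ) :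
    ‖φ u q - (q + u • X q)‖ ≤ (K * M) * u ^ 2 := by
  have hder : ∀ x ∈ Icc 0 u, HasDerivWithinAt (fun s => φ s q - (q + s • X q))
      (X (φ x q) - X q) (Icc 0 u) x := by
    intro x _
    have hs : HasDerivAt (fun s : ℝ => s • X q) ((1:ℝ) • X q) x :=
      (hasDerivAt_id x).smul_const (X q)
    have h1 : HasDerivAt (fun s : ℝ => φ s q - (q + s • X q)) (X (φ x q) - (0 + (1:ℝ) • X q)) x :=
      (hφ x q).sub ((hasDerivAt_const x q).add hs)
    simpa using h1.hasDerivWithinAt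
  have hbound : ∀ x ∈ Icc 0 u, ‖X (φ x q) - X q‖ ≤ K * M * u := by
    intro x hx
    have h1 : ‖X (φ x q) - X q‖ ≤ K * ‖φ x q - q‖ := by
      simpa [dist_eq_norm] using hK.dist_le_mul (φ x q) q
    have h2 : ‖φ x q - q‖ ≤ M * |x| := flow_dist hM hφ0 hφ x q
    have hM0 : 0 ≤ M := le_trans (norm_nonneg _) (hM q)
    have : |x| ≤ u := by rw [abs_of_nonneg hx.1]; exact hx.2
    calc ‖X (φ x q) - X q‖ ≤ K * (M * |x|) := le_trans h1 (mul_le_mul_of_nonneg_left h2 K.coe_nonneg)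
      _ ≤ K * M * u := by rw [← mul_assoc]; exact mul_le_mul_of_nonneg_left this (by positivity)
  have := Convex.norm_image_sub_le_of_norm_hasDerivWithin_le hder hbound
    (convex_Icc 0 u) (left_mem_Icc.2 hu) (right_mem_Icc.2 hu)
  have h0 : φ 0 q - (q + (0:ℝ) • X q) = 0 := by simp [hφ0]
  rw [h0, sub_zero] at this
  calc ‖φ u q - (q + u • X q)‖ ≤ K * M * u * ‖u - 0‖ := this
    _ = K * M * u ^ 2 := by rw [sub_zero, Real.norm_eq_abs, abs_of_nonneg hu]; ring

end Flow


lemma step_est {X : ℝ×ℝ → ℝ×ℝ} {K : NNReal} {M : ℝ} {φ : ℝ → ℝ×ℝ → ℝ×ℝ}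
    (hX : ContDiff ℝ 1 X) (hK : LipschitzWith K X) (hM : ∀ p, ‖X p‖ ≤ M)
    (htr : ∀ q, (fderiv ℝ X q (1,0)).1 + (fderiv ℝ X q (0,1)).2 = 0)
    (hφ0 : ∀ q, φ 0 q = q)
    (hφ : ∀ t q, HasDerivAt (fun s => φ s q) (X (φ t q)) t)
    {u : ℝ} (hu : 0 ≤ u) (hu1 : u ≤ 1) (huK : u * K ≤ 1/2)
    {g : ℝ×ℝ → ℝ} {Lg : ℝ} (hLg0 : 0 ≤ Lg)
    (hLg : ∀ p p', |g p - g p'| ≤ Lg * ‖p - p'‖)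
    {S : Set (ℝ×ℝ)} (hScl : IsClosed S) (hgS : ∀ p, p ∉ S → g p = 0) :
    ∫⁻ q, ENNReal.ofReal (g (φ u q))
      ≤ ENNReal.ofReal (1 + 4*K^2*u^2) * (∫⁻ q, ENNReal.ofReal (g q))
        + ENNReal.ofReal (Lg * (K*M) * u^2) * volume (cthickening (M+1) S) := by
  have hM0 : 0 ≤ M := le_trans (norm_nonneg _) (hM 0)
  set S' := cthickening (M+1) S with hS'
  set ψ : ℝ×ℝ → ℝ×ℝ := fun q => q + u • X q with hψ
  have hu2 : 2 * K^2 * u^2 ≤ 1/2 := by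
    have h1 : (0:ℝ) ≤ u * K := mul_nonneg hu K.coe_nonneg
    nlinarith [h1, huK]
  have hpt : ∀ q, ENNReal.ofReal (g (φ u q)) ≤ ENNReal.ofReal (g (ψ q))
      + S'.indicator (fun _ => ENNReal.ofReal (Lg * (K*M) * u^2)) q := by
    intro q
    by_cases hq : q ∈ S'
    · rw [indicator_of_mem hq]
      have happ : ‖φ u q - ψ q‖ ≤ (K*M) * u^2 := flow_approx hK hM hφ0 hφ hu q
      have h1 : g (φ u q) ≤ g (ψ q) + Lg * ((K*M) * u^2) := by
        have := hLg (φ u q) (ψ q)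
        have h2 : |g (φ u q) - g (ψ q)| ≤ Lg * ((K*M)*u^2) :=
          le_trans this (mul_le_mul_of_nonneg_left happ hLg0)
        have := (abs_le.1 h2).2
        linarith
      calc ENNReal.ofReal (g (φ u q)) ≤ ENNReal.ofReal (g (ψ q) + Lg * ((K*M)*u^2)) :=
            ENNReal.ofReal_le_ofReal h1
        _ ≤ ENNReal.ofReal (g (ψ q)) + ENNReal.ofReal (Lg * (K*M) * u^2) := by
            rw [← mul_assoc]
            exact ENNReal.ofReal_add_le
    · rw [indicator_of_notMem hq]
      have hout : φ u q ∉ S := by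
        intro hmem
        apply hq
        refine mem_cthickening_of_dist_le q (φ u q) (M+1) S hmem ?_
        have := flow_dist hM hφ0 hφ u q
        rw [dist_eq_norm, norm_sub_rev]
        calc ‖φ u q - q‖ ≤ M * |u| := this
          _ ≤ M + 1 := by rw [abs_of_nonneg hu]; nlinarith
      rw [hgS _ hout]
      simp
  calc ∫⁻ q, ENNReal.ofReal (g (φ u q))
      ≤ ∫⁻ q, (ENNReal.ofReal (g (ψ q))
          + S'.indicator (fun _ => ENNReal.ofReal (Lg * (K*M) * u^2)) q) := lintegral_mono hpt
    _ = (∫⁻ q, ENNReal.ofReal (g (ψ q)))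
          + ∫⁻ q, S'.indicator (fun _ => ENNReal.ofReal (Lg * (K*M) * u^2)) q := by
        apply lintegral_add_right
        exact measurable_const.indicator (isClosed_cthickening).measurableSet
    _ ≤ ENNReal.ofReal (1 + 4*K^2*u^2) * (∫⁻ q, ENNReal.ofReal (g q))
          + ENNReal.ofReal (Lg * (K*M) * u^2) * volume S' := by
        gcongr
        · exact psi_lintegral hX hK htr hu huK hu2 (fun p => ENNReal.ofReal (g p))
        · rw [lintegral_indicator_const (isClosed_cthickening).measurableSet]
theorem aux_le {X : ℝ×ℝ → ℝ×ℝ} (hX : ContDiff ℝ 1 X) (hcX : HasCompactSupport X)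
    (hdiv : ∀ p : ℝ×ℝ,
      deriv (fun y : ℝ => (X (y, p.2)).1) p.1 + deriv (fun z : ℝ => (X (p.1, z)).2) p.2 = 0)
    {φ : ℝ → ℝ×ℝ → ℝ×ℝ} (hφ0 : ∀ q, φ 0 q = q)
    (hφ : ∀ t q, HasDerivAt (fun s => φ s q) (X (φ t q)) t)
    {t : ℝ} (ht : 0 ≤ t) {f : ℝ×ℝ → ℝ} {Lf : NNReal} (hLf : LipschitzWith Lf f)
    (hcf : HasCompactSupport f) :
    ∫⁻ q, ENNReal.ofReal (f (φ t q)) ≤ ∫⁻ q, ENNReal.ofReal (f q) := by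
  obtain ⟨K, hK⟩ := ContDiff.lipschitzWith_of_hasCompactSupport hcX hX one_ne_zero
  obtain ⟨M₀, hM₀⟩ := hcX.exists_bound_of_continuous hX.continuous
  set M : ℝ := max M₀ 0 with hMdef
  have hM : ∀ p, ‖X p‖ ≤ M := fun p => le_trans (hM₀ p) (le_max_left _ _)
  have hM0 : (0:ℝ) ≤ M := le_max_right _ _
  have htr : ∀ q, (fderiv ℝ X q (1,0)).1 + (fderiv ℝ X q (0,1)).2 = 0 := by
    intro q
    rw [← partial1 ((hX.differentiable one_ne_zero) q), ← partial2 ((hX.differentiable one_ne_zero) q)]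
    exact hdiv q
  set Lg : ℝ := Lf * Real.exp (K * t) with hLgdef
  have hLg0 : (0:ℝ) ≤ Lg := by positivity
  set S : Set (ℝ×ℝ) := cthickening (M*t) (tsupport f) with hSdef
  have hScl : IsClosed S := isClosed_cthickening
  have hScomp : IsCompact S := IsCompact.cthickening hcf
  set S' : Set (ℝ×ℝ) := cthickening (M+1) S with hS'def
  have hS'fin : volume S' ≠ ⊤ := (IsCompact.cthickening hScomp).measure_lt_top.ne
  set A : ENNReal := ∫⁻ q, ENNReal.ofReal (f q) with hAdef
  have hA : A ≠ ⊤ := by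
    obtain ⟨C, hC⟩ := hcf.exists_bound_of_continuous hLf.continuous
    have hpt : ∀ q, ENNReal.ofReal (f q)
        ≤ (tsupport f).indicator (fun _ => ENNReal.ofReal C) q := by
      intro q
      by_cases hq : q ∈ tsupport f
      · rw [indicator_of_mem hq]
        exact ENNReal.ofReal_le_ofReal (le_trans (le_abs_self _) (Real.norm_eq_abs _ ▸ hC q))
      · rw [indicator_of_notMem hq, image_eq_zero_of_notMem_tsupport hq]
        simp
    have := lintegral_mono (μ := (volume : MeasureTheory.Measure (ℝ×ℝ))) hpt
    rw [lintegral_indicator_const (isClosed_tsupport f).measurableSet] at this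
    exact ne_top_of_le_ne_top (ENNReal.mul_ne_top ENNReal.ofReal_ne_top
      hcf.measure_lt_top.ne) this
  set n₀ : ℕ := ⌈t + 2*t*K⌉₊ + 1 with hn₀def
  have main : ∀ n : ℕ, n₀ ≤ n →
      (∫⁻ q, ENNReal.ofReal (f (φ t q)))
        ≤ ENNReal.ofReal (Real.exp (4*K^2*t^2/n))
            * (A + ENNReal.ofReal (Lg*(K*M)*t^2/n) * volume S') := by
    intro n hn
    have hn1 : 1 ≤ n := le_trans (Nat.le_add_left 1 _) hn
    have hnR : (0:ℝ) < n := by exact_mod_cast hn1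
    have hceil : t + 2*t*K ≤ (n:ℝ) := by
      calc t + 2*t*K ≤ (⌈t + 2*t*K⌉₊ : ℝ) := Nat.le_ceil _
        _ ≤ (n:ℝ) := by exact_mod_cast le_trans (Nat.le_succ _) hn
    set u : ℝ := t/n with hudef
    have hu0 : 0 ≤ u := div_nonneg ht hnR.le
    have hu1 : u ≤ 1 := by
      rw [div_le_one hnR]
      nlinarith [mul_nonneg (mul_nonneg (by norm_num : (0:ℝ) ≤ 2) ht) K.coe_nonneg]
    have huK : u * K ≤ 1/2 := by
      rw [hudef, div_mul_eq_mul_div, div_le_div_iff₀ hnR (by norm_num : (0:ℝ) < 2)]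
      nlinarith
    set E : ENNReal := ENNReal.ofReal (1 + 4*K^2*u^2) with hEdef
    have hE1 : (1:ENNReal) ≤ E := by
      rw [hEdef, ← ENNReal.ofReal_one]
      exact ENNReal.ofReal_le_ofReal (le_add_of_nonneg_right (by positivity))
    set B : ENNReal := ENNReal.ofReal (Lg*(K*M)*u^2) * volume S' with hBdef
    have hrec : ∀ k : ℕ, k ≤ n →
        (∫⁻ q, ENNReal.ofReal (f (φ ((k:ℝ)*u) q))) ≤ E^k * (A + (k:ENNReal) * B) := by
      intro k
      induction k with
      | zero => intro _; simp [hφ0, hAdef]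
      | succ k ih =>
        intro hk1
        have hk : k ≤ n := le_trans (Nat.le_succ k) hk1
        have ihk := ih hk
        have hkut : (k:ℝ)*u ∈ Icc (0:ℝ) t := by
          constructor
          · positivity
          · rw [hudef]
            rw [mul_div_assoc'] --  k*t/n
            rw [div_le_iff₀ hnR]
            have : (k:ℝ) ≤ n := by exact_mod_cast hk
            nlinarith
        have hgLip : ∀ p p', |f (φ ((k:ℝ)*u) p) - f (φ ((k:ℝ)*u) p')| ≤ Lg * ‖p - p'‖ := by
          intro p p'
          have h1 : dist (f (φ ((k:ℝ)*u) p)) (f (φ ((k:ℝ)*u) p'))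
              ≤ Lf * dist (φ ((k:ℝ)*u) p) (φ ((k:ℝ)*u) p') := hLf.dist_le_mul _ _
          have h2 := flow_lip hK hφ (b := t) hkut p p'
          rw [hφ0, hφ0] at h2
          have h3 : Real.exp (K * ((k:ℝ)*u)) ≤ Real.exp (K * t) :=
            Real.exp_le_exp.2 (mul_le_mul_of_nonneg_left hkut.2 K.coe_nonneg)
          rw [Real.dist_eq] at h1
          have h4 : dist p p' * Real.exp (K * ((k:ℝ)*u)) ≤ dist p p' * Real.exp (K * t) :=
            mul_le_mul_of_nonneg_left h3 dist_nonneg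
          calc |f (φ ((k:ℝ)*u) p) - f (φ ((k:ℝ)*u) p')|
              ≤ Lf * (dist p p' * Real.exp (K * t)) :=
                le_trans h1 (mul_le_mul_of_nonneg_left (le_trans h2 h4) Lf.coe_nonneg)
            _ = Lg * ‖p - p'‖ := by rw [hLgdef, dist_eq_norm]; ring
        have hgS : ∀ p, p ∉ S → f (φ ((k:ℝ)*u) p) = 0 := by
          intro p hp
          by_contra hne
          apply hp
          have hmem : φ ((k:ℝ)*u) p ∈ tsupport f := subset_tsupport f hne
          refine mem_cthickening_of_dist_le p (φ ((k:ℝ)*u) p) _ _ hmem ?_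
          rw [dist_eq_norm, norm_sub_rev]
          calc ‖φ ((k:ℝ)*u) p - p‖ ≤ M * |(k:ℝ)*u| := flow_dist hM hφ0 hφ _ p
            _ ≤ M * t := by
                rw [abs_of_nonneg hkut.1]
                exact mul_le_mul_of_nonneg_left hkut.2 hM0
        have hstep := step_est hX hK hM htr hφ0 hφ hu0 hu1 huK hLg0 hgLip hScl hgS
        have hgroup : ∀ q, φ (((k:ℕ)+1:ℕ)*u : ℝ) q = φ ((k:ℝ)*u) (φ u q) := by
          intro q
          rw [show ((((k:ℕ)+1:ℕ):ℝ)*u) = (k:ℝ)*u + u by push_cast; ring]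
          exact flow_group hK hφ0 hφ ((k:ℝ)*u) u q
        calc (∫⁻ q, ENNReal.ofReal (f (φ (((k:ℕ)+1:ℕ)*u : ℝ) q)))
            = ∫⁻ q, ENNReal.ofReal (f (φ ((k:ℝ)*u) (φ u q))) := by
              congr 1; funext q; rw [hgroup q]
          _ ≤ E * (∫⁻ q, ENNReal.ofReal (f (φ ((k:ℝ)*u) q))) + B := hstep
          _ ≤ E * (E^k * (A + (k:ENNReal) * B)) + B := by gcongr
          _ = E^(k+1) * (A + (k:ENNReal) * B) + B := by rw [pow_succ]; ring
          _ ≤ E^(k+1) * (A + (k:ENNReal) * B) + E^(k+1) * B := by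
              gcongr
              exact le_mul_of_one_le_left' (one_le_pow_of_one_le' hE1 (k+1))
          _ = E^(k+1) * (A + ((k:ℕ)+1:ℕ) * B) := by push_cast; ring
    have hfin := hrec n le_rfl
    rw [show ((n:ℝ)*u) = t by rw [hudef]; field_simp] at hfin
    refine le_trans hfin ?_
    have hEn : E^n ≤ ENNReal.ofReal (Real.exp (4*K^2*t^2/n)) := by
      rw [hEdef, ← ENNReal.ofReal_pow (by positivity)]
      apply ENNReal.ofReal_le_ofReal
      have h1 : (1 + 4*K^2*u^2)^n ≤ (Real.exp (4*K^2*u^2))^n := by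
        apply pow_le_pow_left₀ (by positivity)
        linarith [Real.add_one_le_exp (4*K^2*u^2)]
      refine le_trans h1 ?_
      rw [← Real.exp_nat_mul]
      apply Real.exp_le_exp.2
      have hne : (n:ℝ) ≠ 0 := hnR.ne'
      rw [hudef]
      rw [show (n:ℝ) * (4*(K:ℝ)^2*(t/n)^2) = 4*K^2*t^2/n by field_simp]
    have hnB : (n:ENNReal) * (ENNReal.ofReal (Lg*(K*M)*u^2) * volume S')
        = ENNReal.ofReal (Lg*(K*M)*t^2/n) * volume S' := by
      rw [← mul_assoc, ← ENNReal.ofReal_natCast n, ← ENNReal.ofReal_mul (by positivity)]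
      congr 2
      rw [hudef]
      field_simp
    calc E^n * (A + (n:ENNReal) * B)
        ≤ ENNReal.ofReal (Real.exp (4*K^2*t^2/n)) * (A + (n:ENNReal) * B) := by gcongr
      _ = ENNReal.ofReal (Real.exp (4*K^2*t^2/n))
            * (A + ENNReal.ofReal (Lg*(K*M)*t^2/n) * volume S') := by rw [hBdef, hnB]
  -- limit as n → ∞
  have h1 : Filter.Tendsto (fun n : ℕ => (4*K^2*t^2/n : ℝ)) Filter.atTop (nhds 0) :=
    tendsto_const_div_atTop_nhds_zero_nat _
  have h2 : Filter.Tendsto (fun n : ℕ => (Lg*(K*M)*t^2/n : ℝ)) Filter.atTop (nhds 0) :=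
    tendsto_const_div_atTop_nhds_zero_nat _
  have h3 : Filter.Tendsto (fun n : ℕ => ENNReal.ofReal (Real.exp (4*K^2*t^2/n)))
      Filter.atTop (nhds 1) := by
    have := (ENNReal.continuous_ofReal.tendsto (Real.exp 0)).comp
      ((Real.continuous_exp.tendsto 0).comp h1)
    simpa [Function.comp_def] using this
  have h4 : Filter.Tendsto (fun n : ℕ => ENNReal.ofReal (Lg*(K*M)*t^2/n) * volume S')
      Filter.atTop (nhds 0) := by
    have h5 := (ENNReal.continuous_ofReal.tendsto 0).comp h2
    simp only [ENNReal.ofReal_zero] at h5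
    have := ENNReal.Tendsto.mul_const h5 (Or.inr hS'fin)
    simpa using this
  have h6 : Filter.Tendsto (fun n : ℕ => A + ENNReal.ofReal (Lg*(K*M)*t^2/n) * volume S')
      Filter.atTop (nhds A) := by
    have := Filter.Tendsto.const_add A h4
    simpa using this
  have h7 : Filter.Tendsto (fun n : ℕ => ENNReal.ofReal (Real.exp (4*K^2*t^2/n))
      * (A + ENNReal.ofReal (Lg*(K*M)*t^2/n) * volume S')) Filter.atTop (nhds A) := by
    have := ENNReal.Tendsto.mul h3 (Or.inl one_ne_zero) h6 (Or.inr ENNReal.one_ne_top)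
    simpa using this
  exact ge_of_tendsto h7 (Filter.eventually_atTop.2 ⟨n₀, main⟩)
theorem aux_eq {X : ℝ×ℝ → ℝ×ℝ} (hX : ContDiff ℝ 1 X) (hcX : HasCompactSupport X)
    (hdiv : ∀ p : ℝ×ℝ,
      deriv (fun y : ℝ => (X (y, p.2)).1) p.1 + deriv (fun z : ℝ => (X (p.1, z)).2) p.2 = 0)
    {φ : ℝ → ℝ×ℝ → ℝ×ℝ} (hφ0 : ∀ q, φ 0 q = q)
    (hφ : ∀ t q, HasDerivAt (fun s => φ s q) (X (φ t q)) t)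
    {t : ℝ} (ht : 0 ≤ t) {f : ℝ×ℝ → ℝ} {Lf : NNReal} (hLf : LipschitzWith Lf f)
    (hcf : HasCompactSupport f) :
    ∫⁻ q, ENNReal.ofReal (f (φ t q)) = ∫⁻ q, ENNReal.ofReal (f q) := by
  obtain ⟨K, hK⟩ := ContDiff.lipschitzWith_of_hasCompactSupport hcX hX one_ne_zero
  obtain ⟨M₀, hM₀⟩ := hcX.exists_bound_of_continuous hX.continuous
  set M : ℝ := max M₀ 0 with hMdef
  have hM : ∀ p, ‖X p‖ ≤ M := fun p => le_trans (hM₀ p) (le_max_left _ _)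
  have hM0 : (0:ℝ) ≤ M := le_max_right _ _
  -- reversed field and flow
  set Y : ℝ×ℝ → ℝ×ℝ := fun p => -X p with hYdef
  set χ : ℝ → ℝ×ℝ → ℝ×ℝ := fun s q => φ (-s) q with hχdef
  have hYc : ContDiff ℝ 1 Y := hX.neg
  have hYcs : HasCompactSupport Y := by
    rw [hYdef]
    exact hcX.comp_left (g := Neg.neg) neg_zero
  have hYdiv : ∀ p : ℝ×ℝ,
      deriv (fun y : ℝ => (Y (y, p.2)).1) p.1 + deriv (fun z : ℝ => (Y (p.1, z)).2) p.2 = 0 := by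
    intro p
    have e1 : (fun y : ℝ => (Y (y, p.2)).1) = fun y => -((X (y, p.2)).1) := rfl
    have e2 : (fun z : ℝ => (Y (p.1, z)).2) = fun z => -((X (p.1, z)).2) := rfl
    rw [e1, e2, deriv.fun_neg, deriv.fun_neg]
    have := hdiv p
    linarith
  have hχ0 : ∀ q, χ 0 q = q := by intro q; simp [hχdef, hφ0]
  have hχ : ∀ s q, HasDerivAt (fun r => χ r q) (Y (χ s q)) s := by
    intro s q
    have h1 : HasDerivAt (fun r : ℝ => -r) (-1 : ℝ) s := (hasDerivAt_id s).neg
    have h2 : HasDerivAt (fun r => φ r q) (X (φ (-s) q)) (-s) := hφ (-s) q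
    have h3 := HasDerivAt.scomp (h := fun r : ℝ => -r) s h2 h1
    simpa [hχdef, hYdef, Function.comp_def] using h3
  -- Lipschitz property of φ t
  have hφt_lip : LipschitzWith (Real.toNNReal (Real.exp (K*t))) (φ t) := by
    apply LipschitzWith.of_dist_le_mul
    intro p p'
    have h2 := flow_lip hK hφ (b := t) (right_mem_Icc.2 ht) p p'
    rw [hφ0, hφ0] at h2
    rw [Real.coe_toNNReal _ (Real.exp_nonneg _)]
    rw [mul_comm]
    exact h2
  -- g := f ∘ φ t  is Lipschitz with compact support
  set g : ℝ×ℝ → ℝ := fun p => f (φ t p) with hgdef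
  have hgLip : LipschitzWith (Lf * Real.toNNReal (Real.exp (K*t))) g := hLf.comp hφt_lip
  have hgcs : HasCompactSupport g := by
    apply HasCompactSupport.intro (IsCompact.cthickening (s := tsupport f) hcf (r := M*t))
    intro p hp
    by_contra hne
    apply hp
    refine mem_cthickening_of_dist_le p (φ t p) _ _ (subset_tsupport f hne) ?_
    rw [dist_eq_norm, norm_sub_rev]
    calc ‖φ t p - p‖ ≤ M * |t| := flow_dist hM hφ0 hφ t p
      _ = M * t := by rw [abs_of_nonneg ht]
  -- two inequalities
  have h1 : ∫⁻ q, ENNReal.ofReal (f (φ t q)) ≤ ∫⁻ q, ENNReal.ofReal (f q) :=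
    aux_le hX hcX hdiv hφ0 hφ ht hLf hcf
  have h2 : ∫⁻ q, ENNReal.ofReal (g (χ t q)) ≤ ∫⁻ q, ENNReal.ofReal (g q) :=
    aux_le hYc hYcs hYdiv hχ0 hχ ht hgLip hgcs
  have h3 : ∀ q, g (χ t q) = f q := by
    intro q
    rw [hgdef, hχdef]
    simp only
    rw [← flow_group hK hφ0 hφ t (-t) q]
    simp [hφ0]
  rw [lintegral_congr (fun q => by rw [h3 q])] at h2
  exact le_antisymm h1 h2
lemma abs_min_one_sub (x y : ℝ) : |min 1 x - min 1 y| ≤ |x - y| := by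
  rcases le_total 1 x with h1 | h1 <;> rcases le_total 1 y with h2 | h2 <;>
    simp only [min_eq_left, min_eq_right, h1, h2, min_eq_left_iff, min_eq_right_iff] <;>
    rw [abs_le] <;> constructor <;>
    cases abs_le.1 (le_refl |x - y|) <;>
    [skip; skip; skip; skip; skip; skip; skip; skip] <;>
    nlinarith [le_abs_self (x - y), neg_abs_le (x - y), abs_nonneg (x - y)]

theorem aux_mp {X : ℝ×ℝ → ℝ×ℝ} (hX : ContDiff ℝ 1 X) (hcX : HasCompactSupport X)
    (hdiv : ∀ p : ℝ×ℝ,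
      deriv (fun y : ℝ => (X (y, p.2)).1) p.1 + deriv (fun z : ℝ => (X (p.1, z)).2) p.2 = 0)
    {φ : ℝ → ℝ×ℝ → ℝ×ℝ} (hφ0 : ∀ q, φ 0 q = q)
    (hφ : ∀ t q, HasDerivAt (fun s => φ s q) (X (φ t q)) t)
    {t : ℝ} (ht : 0 ≤ t) : MeasurePreserving (φ t) volume volume := by
  obtain ⟨K, hK⟩ := ContDiff.lipschitzWith_of_hasCompactSupport hcX hX one_ne_zero
  obtain ⟨M₀, hM₀⟩ := hcX.exists_bound_of_continuous hX.continuous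
  set M : ℝ := max M₀ 0 with hMdef
  have hM : ∀ p, ‖X p‖ ≤ M := fun p => le_trans (hM₀ p) (le_max_left _ _)
  have hM0 : (0:ℝ) ≤ M := le_max_right _ _
  have hφt_lip : LipschitzWith (Real.toNNReal (Real.exp (K*t))) (φ t) := by
    apply LipschitzWith.of_dist_le_mul
    intro p p'
    have h2 := flow_lip hK hφ (b := t) (right_mem_Icc.2 ht) p p'
    rw [hφ0, hφ0] at h2
    rw [Real.coe_toNNReal _ (Real.exp_nonneg _), mul_comm]
    exact h2
  have hmeas : Measurable (φ t) := hφt_lip.continuous.measurable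
  refine ⟨hmeas, ?_⟩
  set C : Set (Set (ℝ×ℝ)) := {U | IsOpen U ∧ Bornology.IsBounded U} with hCdef
  apply Measure.ext_of_generateFrom_of_iUnion C (fun n => ball 0 (n+1))
  · -- σ-algebra generated
    refine Eq.trans (BorelSpace.measurable_eq (α := ℝ×ℝ)) ?_
    rw [borel]
    apply le_antisymm
    · apply MeasurableSpace.generateFrom_le
      intro U hU
      have hUeq : U = ⋃ n : ℕ, U ∩ ball 0 (n+1) := by
        ext x
        simp only [mem_iUnion, mem_inter_iff, mem_ball, dist_zero_right]
        constructor
        · intro hx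
          obtain ⟨n, hn⟩ := exists_nat_gt ‖x‖
          exact ⟨n, hx, by linarith⟩
        · rintro ⟨n, hx, -⟩; exact hx
      rw [hUeq]
      exact MeasurableSet.iUnion fun n => MeasurableSpace.measurableSet_generateFrom
        ⟨IsOpen.inter hU isOpen_ball, (isBounded_ball).subset inter_subset_right⟩
    · exact MeasurableSpace.generateFrom_le fun U hU =>
        MeasurableSpace.measurableSet_generateFrom hU.1
  · intro s hs u hu _
    exact ⟨hs.1.inter hu.1, hs.2.subset inter_subset_left⟩
  · ext x
    simp only [mem_iUnion, mem_ball, dist_zero_right, mem_univ, iff_true]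
    obtain ⟨n, hn⟩ := exists_nat_gt ‖x‖
    exact ⟨n, by push_cast; linarith⟩
  · intro n
    exact ⟨isOpen_ball, isBounded_ball⟩
  · intro n
    rw [Measure.map_apply hmeas measurableSet_ball]
    have hsub : φ t ⁻¹' (ball 0 (n+1)) ⊆ closedBall 0 ((n+1) + M*t) := by
      intro q hq
      simp only [mem_preimage, mem_ball, dist_zero_right] at hq
      simp only [mem_closedBall, dist_zero_right]
      have h1 : ‖φ t q - q‖ ≤ M * |t| := flow_dist hM hφ0 hφ t q
      rw [abs_of_nonneg ht] at h1
      calc ‖q‖ ≤ ‖φ t q‖ + ‖φ t q - q‖ := by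
            have := norm_sub_norm_le (φ t q) q
            have h2 := norm_add_le (φ t q) (q - φ t q)
            calc ‖q‖ = ‖φ t q + (q - φ t q)‖ := by ring_nf
              _ ≤ ‖φ t q‖ + ‖q - φ t q‖ := norm_add_le _ _
              _ = ‖φ t q‖ + ‖φ t q - q‖ := by rw [norm_sub_rev]
        _ ≤ (n+1) + M*t := by push_cast; linarith
    exact ne_top_of_le_ne_top (isCompact_closedBall 0 _).measure_lt_top.ne (measure_mono hsub)
  · -- main equality on bounded open sets
    intro U hU
    rw [Measure.map_apply hmeas hU.1.measurableSet]
    -- complement nonempty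
    obtain ⟨R, hR⟩ := hU.2.subset_closedBall 0
    have hUc : Uᶜ.Nonempty := by
      refine ⟨(|R|+1, 0), fun hmem => ?_⟩
      have := hR hmem
      simp only [mem_closedBall, dist_zero_right, Prod.norm_def] at this
      have h1 : ‖(|R| + 1 : ℝ)‖ = |R| + 1 := by
        rw [Real.norm_eq_abs, abs_of_nonneg (by positivity)]
      rw [h1] at this
      have h2 : |R| + 1 ≤ max (|R|+1) ‖(0:ℝ)‖ := le_max_left _ _
      have := le_trans h2 this
      linarith [le_abs_self R]
    set d : ℝ×ℝ → ℝ := fun q => Metric.infDist q Uᶜ with hddef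
    set fn : ℕ → ℝ×ℝ → ℝ := fun n q => min 1 ((n:ℝ) * d q) with hfndef
    have hd0 : ∀ q, 0 ≤ d q := fun q => Metric.infDist_nonneg
    have hfn_lip : ∀ n : ℕ, LipschitzWith (n : NNReal) (fn n) := by
      intro n
      apply LipschitzWith.of_dist_le_mul
      intro p p'
      rw [Real.dist_eq]
      calc |fn n p - fn n p'| ≤ |(n:ℝ) * d p - (n:ℝ) * d p'| := abs_min_one_sub _ _
        _ = (n:ℝ) * |d p - d p'| := by rw [← mul_sub, abs_mul, abs_of_nonneg (n.cast_nonneg : (0:ℝ) ≤ n)]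
        _ ≤ (n:ℝ) * dist p p' := by
            refine mul_le_mul_of_nonneg_left ?_ n.cast_nonneg
            rw [← Real.dist_eq]
            exact (lipschitz_infDist_pt Uᶜ).dist_le_mul p p' |>.trans (by rw [NNReal.coe_one, one_mul])
        _ = (n : NNReal) * dist p p' := by norm_cast
    have hfn_cs : ∀ n : ℕ, HasCompactSupport (fn n) := by
      intro n
      apply HasCompactSupport.intro (isCompact_of_isClosed_isBounded isClosed_closure hU.2.closure)
      intro p hp
      have hpU : p ∈ Uᶜ := fun hmem => hp (subset_closure hmem)
      have : d p = 0 := Metric.infDist_zero_of_mem hpU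
      simp [hfndef, this]
    have hfn_mono : ∀ q, Monotone (fun n : ℕ => ENNReal.ofReal (fn n q)) := by
      intro q n m hnm
      apply ENNReal.ofReal_le_ofReal
      exact min_le_min le_rfl (mul_le_mul_of_nonneg_right (by exact_mod_cast hnm) (hd0 q))
    have hsup : ∀ q, (⨆ n : ℕ, ENNReal.ofReal (fn n q)) = U.indicator (fun _ => (1:ENNReal)) q := by
      intro q
      by_cases hq : q ∈ U
      · rw [indicator_of_mem hq]
        apply le_antisymm
        · exact iSup_le fun n => by
            rw [← ENNReal.ofReal_one]
            exact ENNReal.ofReal_le_ofReal (min_le_left _ _)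
        · have hdq : 0 < d q := by
            rw [hddef]
            exact (hU.1.isClosed_compl.notMem_iff_infDist_pos hUc).1 (by simp [hq])
          obtain ⟨n, hn⟩ := exists_nat_ge (1 / d q)
          have h1 : (1:ℝ) ≤ (n:ℝ) * d q := by
            rw [div_le_iff₀ hdq] at hn
            linarith
          refine le_iSup_of_le n ?_
          rw [hfndef]
          simp only [min_eq_left h1]
          simp
      · rw [indicator_of_notMem hq]
        have : d q = 0 := Metric.infDist_zero_of_mem hq
        simp [hfndef, this]
    have hmeas_fn : ∀ n : ℕ, Measurable (fun q => ENNReal.ofReal (fn n q)) := fun n =>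
      ENNReal.measurable_ofReal.comp (hfn_lip n).continuous.measurable
    have hmeas_fnφ : ∀ n : ℕ, Measurable (fun q => ENNReal.ofReal (fn n (φ t q))) := fun n =>
      (hmeas_fn n).comp hmeas
    have hre : ∀ n : ℕ, (∫⁻ q, ENNReal.ofReal (fn n (φ t q))) = ∫⁻ q, ENNReal.ofReal (fn n q) :=
      fun n => aux_eq hX hcX hdiv hφ0 hφ ht (hfn_lip n) (hfn_cs n)
    calc volume (φ t ⁻¹' U) = ∫⁻ q, (φ t ⁻¹' U).indicator (fun _ => (1:ENNReal)) q := by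
          rw [lintegral_indicator_const (hU.1.measurableSet.preimage hmeas)]
          simp
      _ = ∫⁻ q, ⨆ n : ℕ, ENNReal.ofReal (fn n (φ t q)) := by
          apply lintegral_congr
          intro q
          rw [hsup (φ t q)]
          by_cases hq : φ t q ∈ U <;>
            simp [indicator_of_mem, indicator_of_notMem, hq, mem_preimage]
      _ = ⨆ n : ℕ, ∫⁻ q, ENNReal.ofReal (fn n (φ t q)) := by
          apply lintegral_iSup hmeas_fnφ
          intro n m hnm q
          exact hfn_mono (φ t q) hnm
      _ = ⨆ n : ℕ, ∫⁻ q, ENNReal.ofReal (fn n q) := by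
          congr 1; funext n; exact hre n
      _ = ∫⁻ q, ⨆ n : ℕ, ENNReal.ofReal (fn n q) := by
          rw [lintegral_iSup hmeas_fn]
          intro n m hnm q
          exact hfn_mono q hnm
      _ = ∫⁻ q, U.indicator (fun _ => (1:ENNReal)) q := lintegral_congr hsup
      _ = volume U := by
          rw [lintegral_indicator_const hU.1.measurableSet]
          simp

/-- A flow of a C¹ compactly supported divergence-free vector field on ℝ²
preserves two-dimensional Lebesgue measure at every time t. -/
theorem stmt_3 (X : ℝ × ℝ → ℝ × ℝ) (hX : ContDiff ℝ 1 X) (hc : HasCompactSupport X)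
    (hdiv : ∀ p : ℝ × ℝ,
      deriv (fun y : ℝ => (X (y, p.2)).1) p.1
        + deriv (fun z : ℝ => (X (p.1, z)).2) p.2 = 0)
    (φ : ℝ → ℝ × ℝ → ℝ × ℝ)
    (hφ0 : ∀ q : ℝ × ℝ, φ 0 q = q)
    (hφ : ∀ (t : ℝ) (q : ℝ × ℝ), HasDerivAt (fun s => φ s q) (X (φ t q)) t) :
    ∀ t : ℝ, MeasurePreserving (φ t) volume volume := by
  intro t
  rcases le_or_gt 0 t with ht | ht
  · exact aux_mp hX hc hdiv hφ0 hφ ht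
  · set Y : ℝ×ℝ → ℝ×ℝ := fun p => -X p with hYdef
    set χ : ℝ → ℝ×ℝ → ℝ×ℝ := fun s q => φ (-s) q with hχdef
    have hYc : ContDiff ℝ 1 Y := hX.neg
    have hYcs : HasCompactSupport Y := by
      rw [hYdef]
      exact hc.comp_left (g := Neg.neg) neg_zero
    have hYdiv : ∀ p : ℝ×ℝ,
        deriv (fun y : ℝ => (Y (y, p.2)).1) p.1 + deriv (fun z : ℝ => (Y (p.1, z)).2) p.2 = 0 := by
      intro p
      have e1 : (fun y : ℝ => (Y (y, p.2)).1) = fun y => -((X (y, p.2)).1) := rfl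
      have e2 : (fun z : ℝ => (Y (p.1, z)).2) = fun z => -((X (p.1, z)).2) := rfl
      rw [e1, e2, deriv.fun_neg, deriv.fun_neg]
      have := hdiv p
      linarith
    have hχ0 : ∀ q, χ 0 q = q := by intro q; simp [hχdef, hφ0]
    have hχ : ∀ s q, HasDerivAt (fun r => χ r q) (Y (χ s q)) s := by
      intro s q
      have h1 : HasDerivAt (fun r : ℝ => -r) (-1 : ℝ) s := (hasDerivAt_id s).neg
      have h2 : HasDerivAt (fun r => φ r q) (X (φ (-s) q)) (-s) := hφ (-s) q
      have h3 := HasDerivAt.scomp (h := fun r : ℝ => -r) s h2 h1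
      simpa [hχdef, hYdef, Function.comp_def] using h3
    have hmp := aux_mp hYc hYcs hYdiv hχ0 hχ (t := -t) (by linarith)
    have hfun : (χ (-t)) = φ t := by funext q; simp [hχdef]
    rwa [hfun] at hmp
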